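/- Let R be a noetherian local ring. The following are equivalent: (1) for each Serre subcategory S of the category of R-modules, MP[S] is either Spec(R), or {p} for some minimal prime ideal p of R, or the empty set; (2) dim R ≤ 1. -/

import Mathlib

/-!
Common framework: a *Serre class* is a class of (bundled) `R`-modules closed under
submodules, quotient modules and extensions.  `MelkerssonCondition R P I` is the
Melkersson condition `(C_I)`: if `Γ_I(M) = M` (every element of `M` is annihilated by
some power of `I`) and `(0 :_M I)` (the `I`-torsion-by-`I` submodule `torsionBySet`)
belongs to the class, then `M` belongs to the class.  `MP R P` is the set of prime
ideals `p` such that the class satisfies `(C_p)`.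
-/

open CategoryTheory

structure SerreClass (R : Type) [CommRing R] where
  mem : ModuleCat.{0} R → Prop
  mem_of_injective : ∀ {M N : ModuleCat.{0} R} (f : M →ₗ[R] N),
    Function.Injective f → mem N → mem M
  mem_of_surjective : ∀ {M N : ModuleCat.{0} R} (f : M →ₗ[R] N),
    Function.Surjective f → mem M → mem N
  mem_of_extension : ∀ {A M B : ModuleCat.{0} R} (f : A →ₗ[R] M) (g : M →ₗ[R] B),
    Function.Injective f → Function.Surjective g →
    LinearMap.range f = LinearMap.ker g → mem A → mem B → mem M

variable (R : Type) [CommRing R]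

/-- `Γ_I(M) = M`: every element of `M` is annihilated by some power of `I`. -/
def IsTorsionByPowers (I : Ideal R) (M : ModuleCat.{0} R) : Prop :=
  ∀ m : M, ∃ n : ℕ, ∀ x ∈ I ^ n, x • m = 0

/-- The Melkersson condition `(C_I)` for a class `P` of `R`-modules:
if `Γ_I(M) = M` and `(0 :_M I) ∈ P` then `M ∈ P`. -/
def MelkerssonCondition (P : ModuleCat.{0} R → Prop) (I : Ideal R) : Prop :=
  ∀ M : ModuleCat.{0} R, IsTorsionByPowers R I M →
    P (ModuleCat.of R (Submodule.torsionBySet R M (I : Set R))) → P M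

/-- `MP[P]`: the set of prime ideals `p` such that `P` satisfies `(C_p)`. -/
def MP (P : ModuleCat.{0} R → Prop) : Set (PrimeSpectrum R) :=
  { p | MelkerssonCondition R P p.asIdeal }

/-- The class `FG` of finitely generated `R`-modules. -/
def FGClass : ModuleCat.{0} R → Prop := fun M => Module.Finite R M

/-- Membership in the extension subcategory `P * Q`: `M` fits in a short exact
sequence `0 → A → M → B → 0` with `A ∈ P` and `B ∈ Q`. -/
def IsExtensionIn (P Q : ModuleCat.{0} R → Prop) (M : ModuleCat.{0} R) : Prop :=
  ∃ (A B : ModuleCat.{0} R) (f : A →ₗ[R] M) (g : M →ₗ[R] B),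
    Function.Injective f ∧ Function.Surjective g ∧
    LinearMap.range f = LinearMap.ker g ∧ P A ∧ Q B

/-- `Supp(P) = ⋃_{M ∈ P} Supp_R M`. -/
def SuppClass (P : ModuleCat.{0} R → Prop) : Set (PrimeSpectrum R) :=
  ⋃ (M : ModuleCat.{0} R) (_ : P M), Module.support R M

/-- `E` is an injective hull of `N`: `E` is injective and contains `N` as an
essential submodule. -/
def IsInjectiveHull (N E : ModuleCat.{0} R) : Prop :=
  Module.Injective R E ∧ ∃ f : N →ₗ[R] E, Function.Injective f ∧
    ∀ W : Submodule R E, W ≠ ⊥ → W ⊓ LinearMap.range f ≠ ⊥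

/-- `M` is `I`-cofinite: `Supp M ⊆ V(I)` and `Ext^i_R(R/I, M)` is a finitely
generated `R`-module for every `i`. -/
noncomputable def IsCofiniteWrt (I : Ideal R) (M : ModuleCat.{0} R) : Prop :=
  Module.support R M ⊆ PrimeSpectrum.zeroLocus (I : Set R) ∧
  ∀ i : ℕ, Module.Finite R
    (((Ext R (ModuleCat.{0} R) i).obj (Opposite.op (ModuleCat.of R (R ⧸ I)))).obj M)

/-- A specialization closed subset of `Spec R`. -/
def SpecializationClosed (W : Set (PrimeSpectrum R)) : Prop :=
  ∀ p ∈ W, ∀ q : PrimeSpectrum R, p.asIdeal ≤ q.asIdeal → q ∈ W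


namespace StmtAux

variable {R : Type} [CommRing R]

lemma mem_zero (S : SerreClass R) {A : Type} [AddCommGroup A] [Module R A]
    [Subsingleton A] {N : ModuleCat.{0} R} (h : S.mem N) : S.mem (ModuleCat.of R A) :=
  S.mem_of_injective (N := N) 0 (fun a b _ => Subsingleton.elim (α := A) a b) h

lemma mem_pi (S : SerreClass R) {K : Type} [AddCommGroup K] [Module R K]
    (h : S.mem (ModuleCat.of R K)) : ∀ r : ℕ, S.mem (ModuleCat.of R (Fin r → K))
  | 0 => mem_zero S (A := Fin 0 → K) h
  | (r+1) => by
      have hB := mem_pi S h r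
      have f : K →ₗ[R] (Fin (r+1) → K) := LinearMap.single R (fun _ : Fin (r+1) => K) 0
      refine S.mem_of_extension (A := ModuleCat.of R K)
        (M := ModuleCat.of R (Fin (r+1) → K)) (B := ModuleCat.of R (Fin r → K))
        (LinearMap.single R (fun _ : Fin (r+1) => K) 0)
        (LinearMap.funLeft R K Fin.succ) ?_ ?_ ?_ h hB
      · intro a b hab
        have := congrFun hab (0 : Fin (r+1))
        simpa using this
      · exact LinearMap.funLeft_surjective_of_injective R K _ (Fin.succ_injective r)
      · have : LinearMap.range (LinearMap.single R (fun _ : Fin (r+1) => K) 0) =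
            LinearMap.ker (LinearMap.funLeft R K Fin.succ) := by
          ext v
          constructor
          · rintro ⟨x, rfl⟩
            simp only [LinearMap.mem_ker]
            funext i
            simp [LinearMap.coe_single, LinearMap.funLeft_apply,
              Pi.single_eq_of_ne (Fin.succ_ne_zero i)]
          · intro hv
            have hv' : ∀ i : Fin r, v i.succ = 0 := fun i => congrFun hv i
            refine ⟨v 0, ?_⟩
            simp only [LinearMap.coe_single]
            funext i
            refine Fin.cases ?_ ?_ i
            · simp
            · intro j
              simp [Pi.single_eq_of_ne (Fin.succ_ne_zero j), hv' j]
        exact this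

end StmtAux

namespace StmtAux

variable {R : Type} [CommRing R]

open Submodule

/-- Membership in `torsionBySet` for an ideal, elementwise. -/
lemma mem_TB {M : Type} [AddCommGroup M] [Module R M] {I : Ideal R} {v : M} :
    v ∈ torsionBySet R M (I : Set R) ↔ ∀ a ∈ I, a • v = 0 := by
  rw [Submodule.mem_torsionBySet_iff]
  exact ⟨fun h a ha => h ⟨a, ha⟩, fun h a => h a.1 a.2⟩

/-- Lemma C: if `(0 :_M I) ∈ S` then `(0 :_M I^{n+1}) ∈ S`. -/
lemma lemC (S : SerreClass R) {M : Type} [AddCommGroup M] [Module R M] {I : Ideal R}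
    (hI : I.FG)
    (h : S.mem (ModuleCat.of R (torsionBySet R M (I : Set R)))) :
    ∀ n : ℕ, S.mem (ModuleCat.of R (torsionBySet R M ((I ^ (n+1) : Ideal R) : Set R)))
  | 0 => by
    have e : (I ^ (0+1) : Ideal R) = I := by rw [zero_add, pow_one]
    rw [e]; exact h
  | (n+1) => by
    have IH := lemC S hI h n
    obtain ⟨r, x, hx⟩ := Submodule.fg_iff_exists_fin_generating_family.mp hI
    set T2 := torsionBySet R M ((I ^ (n+2) : Ideal R) : Set R) with hT2
    set T1 := torsionBySet R M ((I ^ (n+1) : Ideal R) : Set R) with hT1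
    set T0 := torsionBySet R M ((I : Ideal R) : Set R) with hT0
    have hxI : ∀ i, x i ∈ I := fun i => by
      rw [← hx]; exact Submodule.subset_span ⟨i, rfl⟩
    -- the component maps
    have cpf : ∀ (i : Fin r) (v : T2), (x i) • (v : M) ∈ T1 := by
      intro i v
      rw [mem_TB]
      intro a ha
      rw [smul_smul]
      have : a * x i ∈ I ^ (n+2) := by
        rw [pow_succ]
        exact Ideal.mul_mem_mul ha (hxI i)
      exact (mem_TB.mp v.2) _ this
    let c : ∀ _ : Fin r, T2 →ₗ[R] T1 := fun i =>
      LinearMap.codRestrict T1 ((x i) • T2.subtype) (cpf i)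
    let φ : T2 →ₗ[R] (Fin r → T1) := LinearMap.pi c
    have hker : ∀ v : T2, v ∈ LinearMap.ker φ ↔ ∀ i, (x i) • (v : M) = 0 := by
      intro v
      constructor
      · intro hv i
        have := congrFun (show φ v = 0 from hv) i
        exact congrArg Subtype.val this
      · intro hv
        have : φ v = 0 := by
          funext i
          exact Subtype.ext (hv i)
        exact this
    -- the kernel sits inside (0 : I)
    have kpf : ∀ v : LinearMap.ker φ, ((v : T2) : M) ∈ T0 := by
      intro v
      rw [mem_TB]
      intro a ha
      rw [← hx] at ha
      induction ha using Submodule.span_induction with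
      | mem y hy =>
          obtain ⟨i, rfl⟩ := hy
          exact (hker _).mp v.2 i
      | zero => rw [zero_smul]
      | add y z _ _ hy hz => rw [add_smul, hy, hz, add_zero]
      | smul t y _ hy => rw [smul_eq_mul, mul_smul, hy, smul_zero]
    let ψ : LinearMap.ker φ →ₗ[R] T0 :=
      LinearMap.codRestrict T0 (T2.subtype.comp (LinearMap.ker φ).subtype) kpf
    have hψ : Function.Injective ψ := by
      intro a b hab
      have h2 : ((a : T2) : M) = ((b : T2) : M) := congrArg (fun z : T0 => (z : M)) hab
      exact Subtype.ext (Subtype.ext h2)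
    have hA : S.mem (ModuleCat.of R (LinearMap.ker φ)) := S.mem_of_injective ψ hψ h
    have hPi : S.mem (ModuleCat.of R (Fin r → T1)) := mem_pi S IH r
    have hB : S.mem (ModuleCat.of R (LinearMap.range φ)) :=
      S.mem_of_injective (LinearMap.range φ).subtype (Submodule.injective_subtype _) hPi
    exact S.mem_of_extension (A := ModuleCat.of R (LinearMap.ker φ))
      (M := ModuleCat.of R T2) (B := ModuleCat.of R (LinearMap.range φ))
      (LinearMap.ker φ).subtype φ.rangeRestrict
      (Submodule.injective_subtype _) φ.surjective_rangeRestrict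
      (by rw [Submodule.range_subtype, LinearMap.ker_rangeRestrict]) hA hB

end StmtAux

namespace StmtAux

variable {R : Type} [CommRing R]

/-- No chain of three primes when the Krull dimension is at most one. -/
lemma chain_dim {a b c : Ideal R} (ha : a.IsPrime) (hb : b.IsPrime) (hc : c.IsPrime)
    (h1 : a < b) (h2 : b < c) (hdim : ringKrullDim R ≤ 1) : False := by
  let P0 : PrimeSpectrum R := ⟨a, ha⟩
  let P1 : PrimeSpectrum R := ⟨b, hb⟩
  let P2 : PrimeSpectrum R := ⟨c, hc⟩
  have h01 : P0 < P1 := h1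
  have h12 : P1 < P2 := h2
  let s : LTSeries (PrimeSpectrum R) :=
    ((RelSeries.singleton _ P0).snoc P1 (by exact h01)).snoc P2 (by exact h12)
  have hlen : s.length = 2 := rfl
  have h2le := Order.LTSeries.length_le_krullDim s
  rw [hlen] at h2le
  rw [ringKrullDim] at hdim
  have h21 : ((2:ℕ) : WithBot ℕ∞) ≤ 1 := le_trans h2le hdim
  norm_num at h21

/-- In a local ring of dimension at most 1, a non-maximal prime is minimal. -/
lemma minimal_of_ne_max [IsLocalRing R] {p : Ideal R} (hp : p.IsPrime)
    (hpm : p ≠ IsLocalRing.maximalIdeal R) (hdim : ringKrullDim R ≤ 1) :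
    p ∈ minimalPrimes R := by
  obtain ⟨q, hq, hqp⟩ := Ideal.exists_minimalPrimes_le (bot_le (a := p))
  have hqprime : q.IsPrime := hq.1.1
  by_cases hqe : q = p
  · rwa [hqe] at hq
  · exfalso
    have h1 : q < p := lt_of_le_of_ne hqp hqe
    have h2 : p < IsLocalRing.maximalIdeal R :=
      lt_of_le_of_ne (IsLocalRing.le_maximalIdeal hp.ne_top) hpm
    exact chain_dim hqprime hp (IsLocalRing.maximalIdeal.isMaximal R).isPrime h1 h2 hdim

/-- For a minimal prime `p` there are `c` and `s ∉ p` with `s * p^c = 0`. -/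
lemma min_ann [IsNoetherianRing R] {p : Ideal R} (hp : p.IsPrime)
    (hmin : p ∈ minimalPrimes R) :
    ∃ (c : ℕ) (s : R), s ∉ p ∧ ∀ a ∈ p ^ c, s * a = 0 := by
  haveI := hp
  let A := Localization.AtPrime p
  let f := algebraMap R A
  -- the image of p is contained in every prime of A
  have hle : ∀ Q : Ideal A, Q.IsPrime → p.map f ≤ Q := by
    intro Q hQ
    rw [Ideal.map_le_iff_le_comap]
    haveI := hQ
    have hcom : (Q.comap f).IsPrime := Ideal.IsPrime.comap f
    have hsub : Q.comap f ≤ p := by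
      intro x hx
      by_contra hxp
      have hu : IsUnit (f x) := IsLocalization.map_units A (⟨x, hxp⟩ : p.primeCompl)
      exact hQ.ne_top (Q.eq_top_of_isUnit_mem hx hu)
    exact hmin.2 ⟨hcom, bot_le⟩ hsub
  have hrad : p.map f ≤ (⊥ : Ideal A).radical := by
    rw [Ideal.radical_eq_sInf]
    exact le_sInf fun Q hQ => hle Q hQ.2
  have hfg : (p.map f).FG := Ideal.FG.map (IsNoetherian.noetherian p) f
  obtain ⟨c, hc⟩ := Ideal.exists_pow_le_of_le_radical_of_fg hrad hfg
  have hc0 : p.map f ^ c = ⊥ := le_bot_iff.mp hc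
  -- extract the annihilating element
  have hfgc : (p ^ c).FG := IsNoetherian.noetherian _
  obtain ⟨t, g, hg⟩ := Submodule.fg_iff_exists_fin_generating_family.mp hfgc
  have hg0 : ∀ j, ∃ s : p.primeCompl, (s : R) * g j = 0 := by
    intro j
    have : f (g j) = 0 := by
      have h1 : f (g j) ∈ (p.map f) ^ c := by
        rw [← Ideal.map_pow]
        exact Ideal.mem_map_of_mem f (by rw [← hg]; exact Submodule.subset_span ⟨j, rfl⟩)
      rw [hc0] at h1
      exact h1
    exact (IsLocalization.map_eq_zero_iff p.primeCompl A _).mp this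
  choose sj hsj using hg0
  refine ⟨c, ∏ j : Fin t, (sj j : R), ?_, ?_⟩
  · have : (∏ j : Fin t, (sj j : R)) ∈ p.primeCompl := by
      exact Submonoid.prod_mem _ (fun j _ => (sj j).2)
    exact this
  · intro a ha
    rw [← hg] at ha
    induction ha using Submodule.span_induction with
    | mem y hy =>
        obtain ⟨j, rfl⟩ := hy
        calc (∏ i : Fin t, (sj i : R)) * g j
            = (∏ i ∈ Finset.univ.erase j, (sj i : R)) * ((sj j : R) * g j) := by
              rw [← mul_assoc, ← Finset.prod_erase_mul Finset.univ _ (Finset.mem_univ j)]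
          _ = 0 := by rw [hsj j, mul_zero]
    | zero => rw [mul_zero]
    | add y z _ _ hy hz => rw [mul_add, hy, hz, add_zero]
    | smul t' y _ hy => rw [smul_eq_mul, ← mul_assoc, mul_comm _ t', mul_assoc, hy, mul_zero]

end StmtAux

namespace StmtAux

variable {R : Type} [CommRing R]

open Submodule IsLocalRing

lemma tind [IsNoetherianRing R] [IsLocalRing R] (S : SerreClass R) {p : Ideal R}
    (hp : p.IsPrime)
    (hm : MelkerssonCondition R S.mem (maximalIdeal R)) :
    ∀ (j : ℕ) (M : ModuleCat.{0} R), IsTorsionByPowers R p M →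
      S.mem (ModuleCat.of R (torsionBySet R M (p : Set R))) →
      (∀ (v : M) (a : R), a ∈ p ^ j →
        ∃ t : ℕ, ∀ b ∈ (maximalIdeal R) ^ t, b • (a • v) = 0) →
      S.mem M := by
  intro j
  induction j with
  | zero =>
    intro M htors hsoc hbound
    have hmt : IsTorsionByPowers R (maximalIdeal R) M := by
      intro v
      obtain ⟨t, ht⟩ := hbound v 1 (by simp)
      exact ⟨t, fun b hb => by have h0 := ht b hb; rwa [one_smul] at h0⟩
    have hsubset : (p : Set R) ⊆ ((maximalIdeal R : Ideal R) : Set R) :=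
      IsLocalRing.le_maximalIdeal hp.ne_top
    have hle : torsionBySet R M (((maximalIdeal R) : Ideal R) : Set R) ≤
        torsionBySet R M (p : Set R) :=
      torsionBySet_le_torsionBySet_of_subset hsubset
    exact hm M hmt (S.mem_of_injective (Submodule.inclusion hle)
      (Submodule.inclusion_injective hle) hsoc)
  | succ j IH =>
    intro M htors hsoc hbound
    obtain ⟨r, x, hx⟩ :=
      Submodule.fg_iff_exists_fin_generating_family.mp (IsNoetherian.noetherian p)
    have hxp : ∀ i, x i ∈ p := fun i => by rw [← hx]; exact Submodule.subset_span ⟨i, rfl⟩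
    set K := torsionBySet R M (p : Set R) with hK
    have hT2 : S.mem (ModuleCat.of R
        (torsionBySet R M ((p ^ 2 : Ideal R) : Set R))) := by
      have h12 : (p ^ (1+1) : Ideal R) = p ^ 2 := by norm_num
      have := lemC S (IsNoetherian.noetherian p) hsoc 1
      rwa [h12] at this
    set M1 : ModuleCat.{0} R := ModuleCat.of R ((M : Type) ⧸ K) with hM1def
    have htors1 : IsTorsionByPowers R p M1 := by
      intro v
      obtain ⟨w, rfl⟩ := Submodule.Quotient.mk_surjective K v
      obtain ⟨n, hn⟩ := htors w
      exact ⟨n, fun y hy => by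
        rw [← Submodule.Quotient.mk_smul, hn y hy, Submodule.Quotient.mk_zero]⟩
    have qpf : ∀ v : torsionBySet R M ((p ^ 2 : Ideal R) : Set R),
        (Submodule.Quotient.mk (v : M) : ((M : Type) ⧸ K)) ∈
          torsionBySet R ((M : Type) ⧸ K) (p : Set R) := by
      intro v
      rw [mem_TB]
      intro a ha
      rw [← Submodule.Quotient.mk_smul, Submodule.Quotient.mk_eq_zero, hK, mem_TB]
      intro b hb
      rw [smul_smul]
      refine mem_TB.mp v.2 _ ?_
      rw [sq]
      exact Ideal.mul_mem_mul hb ha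
    let qmap : torsionBySet R M ((p ^ 2 : Ideal R) : Set R) →ₗ[R]
        torsionBySet R ((M : Type) ⧸ K) (p : Set R) :=
      LinearMap.codRestrict _
        (K.mkQ.comp (torsionBySet R M ((p ^ 2 : Ideal R) : Set R)).subtype) qpf
    have hqsurj : Function.Surjective qmap := by
      rintro ⟨w, hw⟩
      obtain ⟨v, rfl⟩ := Submodule.Quotient.mk_surjective K w
      have hvmem : v ∈ torsionBySet R M ((p ^ 2 : Ideal R) : Set R) := by
        rw [mem_TB]
        intro z hz
        rw [sq] at hz
        refine Submodule.mul_induction_on hz ?_ ?_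
        · intro y hy z' hz'
          have h1 : z' • v ∈ K := by
            rw [← Submodule.Quotient.mk_eq_zero, Submodule.Quotient.mk_smul]
            exact mem_TB.mp hw z' hz'
          rw [mul_smul]
          rw [hK, mem_TB] at h1
          exact h1 y hy
        · intro u u' hu hu'
          rw [add_smul, hu, hu', add_zero]
      exact ⟨⟨v, hvmem⟩, Subtype.ext rfl⟩
    have hsoc1 : S.mem (ModuleCat.of R (torsionBySet R ((M : Type) ⧸ K) (p : Set R))) :=
      S.mem_of_surjective (M := ModuleCat.of R (torsionBySet R M ((p ^ 2 : Ideal R) : Set R)))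
        (N := ModuleCat.of R (torsionBySet R ((M : Type) ⧸ K) (p : Set R))) qmap hqsurj hT2
    have hbound1 : ∀ (v : M1) (a : R), a ∈ p ^ j →
        ∃ t : ℕ, ∀ b ∈ (maximalIdeal R) ^ t, b • (a • v) = 0 := by
      intro v a ha
      obtain ⟨w, rfl⟩ := Submodule.Quotient.mk_surjective K v
      have hchoice : ∀ i : Fin r, ∃ t, ∀ b ∈ (maximalIdeal R) ^ t,
          b • ((x i * a) • w) = 0 := by
        intro i
        apply hbound w (x i * a)
        rw [pow_succ, mul_comm (x i) a]
        exact Ideal.mul_mem_mul ha (hxp i)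
      choose tt htt using hchoice
      refine ⟨Finset.univ.sup tt, ?_⟩
      intro b hb
      have hmem : b • (a • w) ∈ K := by
        rw [hK, mem_TB]
        intro y hy
        rw [← hx] at hy
        induction hy using Submodule.span_induction with
        | mem z hz =>
          obtain ⟨i, rfl⟩ := hz
          have hbmem : b ∈ (maximalIdeal R) ^ (tt i) :=
            Ideal.pow_le_pow_right (Finset.le_sup (Finset.mem_univ i)) hb
          calc x i • b • a • w = b • ((x i * a) • w) := by
                rw [smul_comm (x i) b, smul_smul (x i) a w]
            _ = 0 := htt i b hbmem
        | zero => rw [zero_smul]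
        | add u u' _ _ hu hu' => rw [add_smul, hu, hu', add_zero]
        | smul t' u _ hu => rw [smul_eq_mul, mul_smul, hu, smul_zero]
      rw [← Submodule.Quotient.mk_smul, ← Submodule.Quotient.mk_smul,
        Submodule.Quotient.mk_eq_zero]
      exact hmem
    have hM1 : S.mem M1 := IH M1 htors1 hsoc1 hbound1
    exact S.mem_of_extension (A := ModuleCat.of R K) (M := M) (B := M1)
      K.subtype K.mkQ (Submodule.injective_subtype K) (Submodule.mkQ_surjective K)
      (by rw [Submodule.range_subtype, Submodule.ker_mkQ]) hsoc hM1

end StmtAux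

namespace StmtAux

variable {R : Type} [CommRing R]

open Submodule IsLocalRing

lemma lemA [IsNoetherianRing R] [IsLocalRing R] (S : SerreClass R)
    (hdim : ringKrullDim R ≤ 1)
    (hm : MelkerssonCondition R S.mem (maximalIdeal R))
    (p : Ideal R) (hp : p.IsPrime) : MelkerssonCondition R S.mem p := by
  by_cases hpm : p = maximalIdeal R
  · rwa [hpm]
  have hmin : p ∈ minimalPrimes R := minimal_of_ne_max hp hpm hdim
  obtain ⟨c, s, hs, hann⟩ := min_ann hp hmin
  intro M htors hsoc
  refine tind S hp hm c M htors hsoc ?_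
  intro v a ha
  obtain ⟨k, hk⟩ := htors v
  set J : Ideal R := Ideal.span {s} ⊔ p ^ (k+1) with hJ
  have hkill : ∀ z ∈ J, z • (a • v) = 0 := by
    intro z hz
    rw [hJ] at hz
    obtain ⟨u, hu, w, hw, rfl⟩ := Submodule.mem_sup.mp hz
    obtain ⟨e, rfl⟩ := Ideal.mem_span_singleton'.mp hu
    have h1 : (e * s) • (a • v) = 0 := by
      rw [smul_smul, mul_assoc, hann a ha, mul_zero, zero_smul]
    have h2 : w • (a • v) = 0 := by
      rw [smul_comm]
      have hwv : w • v = 0 := hk w (Ideal.pow_le_pow_right (Nat.le_succ k) hw)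
      rw [hwv, smul_zero]
    rw [add_smul, h1, h2, add_zero]
  have hrad : maximalIdeal R ≤ J.radical := by
    rw [Ideal.radical_eq_sInf]
    refine le_sInf ?_
    rintro q ⟨hJq, hq⟩
    have hpq : p ≤ q := by
      intro y hy
      have hy1 : y ^ (k+1) ∈ p ^ (k+1) := Ideal.pow_mem_pow hy (k+1)
      exact hq.mem_of_pow_mem (k+1) (hJq ((le_sup_right : p^(k+1) ≤ J) hy1))
    have hsq : s ∈ q := hJq ((le_sup_left : Ideal.span {s} ≤ J)
      (Ideal.mem_span_singleton_self s))
    have hne : p ≠ q := fun h => hs (h ▸ hsq)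
    have hlt : p < q := lt_of_le_of_ne hpq hne
    rcases eq_or_lt_of_le (le_maximalIdeal hq.ne_top) with h | h
    · rw [← h]
    · exact (chain_dim hp hq (maximalIdeal.isMaximal R).isPrime hlt h hdim).elim
  obtain ⟨t, ht⟩ := Ideal.exists_pow_le_of_le_radical_of_fg hrad (IsNoetherian.noetherian _)
  exact ⟨t, fun b hb => hkill b (ht hb)⟩

lemma lemB [IsNoetherianRing R] [IsLocalRing R] (S : SerreClass R)
    (hdim : ringKrullDim R ≤ 1) {p1 p2 : Ideal R} (hp1 : p1.IsPrime) (hp2 : p2.IsPrime)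
    (h1min : p1 ∈ minimalPrimes R) (hne : p1 ≠ p2)
    (hC1 : MelkerssonCondition R S.mem p1) (hC2 : MelkerssonCondition R S.mem p2) :
    MelkerssonCondition R S.mem (maximalIdeal R) := by
  have hrad : maximalIdeal R ≤ (p1 ⊔ p2).radical := by
    rw [Ideal.radical_eq_sInf]
    refine le_sInf ?_
    rintro q ⟨hJq, hq⟩
    have hp1q : p1 ≤ q := le_trans le_sup_left hJq
    have hp2q : p2 ≤ q := le_trans le_sup_right hJq
    have hne' : p1 ≠ q := by
      rintro rfl
      exact hne (le_antisymm (h1min.2 ⟨hp2, bot_le⟩ hp2q) hp2q)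
    have hlt : p1 < q := lt_of_le_of_ne hp1q hne'
    rcases eq_or_lt_of_le (le_maximalIdeal hq.ne_top) with h | h
    · rw [← h]
    · exact (chain_dim hp1 hq (maximalIdeal.isMaximal R).isPrime hlt h hdim).elim
  obtain ⟨k, hk⟩ := Ideal.exists_pow_le_of_le_radical_of_fg hrad (IsNoetherian.noetherian _)
  intro M htors hsoc
  set N := torsionBySet R M (p1 : Set R) with hN
  have htorsN : IsTorsionByPowers R p2 (ModuleCat.of R N) := by
    intro v
    obtain ⟨n, hn⟩ := htors ((show ↥N from v) : ↥M)
    refine ⟨n, fun y hy => ?_⟩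
    have hyv : y • ((show ↥N from v) : ↥M) = 0 :=
      hn y (Ideal.pow_right_mono (le_maximalIdeal hp2.ne_top) n hy)
    exact Subtype.ext hyv
  have hmk : S.mem (ModuleCat.of R
      (torsionBySet R M ((((maximalIdeal R) ^ (k+1)) : Ideal R) : Set R))) :=
    lemC S (IsNoetherian.noetherian _) hsoc k
  have pf : ∀ w : torsionBySet R (↥N) ((p2 : Ideal R) : Set R),
      ((w : ↥N) : M) ∈ torsionBySet R M ((((maximalIdeal R) ^ (k+1)) : Ideal R) : Set R) := by
    intro w
    rw [mem_TB]
    intro b hb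
    have hbJ : b ∈ p1 ⊔ p2 := hk (Ideal.pow_le_pow_right (Nat.le_succ k) hb)
    obtain ⟨u, hu, z, hz, rfl⟩ := Submodule.mem_sup.mp hbJ
    have h1 : u • ((w : ↥N) : M) = 0 := mem_TB.mp (w : ↥N).2 u hu
    have h2 : z • ((w : ↥N) : M) = 0 := by
      have h3 := mem_TB.mp w.2 z hz
      exact congrArg Subtype.val h3
    rw [add_smul, h1, h2, add_zero]
  let θ : torsionBySet R (↥N) ((p2 : Ideal R) : Set R) →ₗ[R]
      torsionBySet R M ((((maximalIdeal R) ^ (k+1)) : Ideal R) : Set R) :=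
    LinearMap.codRestrict _
      (N.subtype.comp (torsionBySet R (↥N) ((p2 : Ideal R) : Set R)).subtype) pf
  have hθ : Function.Injective θ := by
    intro w1 w2 h12
    have h2 : ((w1 : ↥N) : M) = ((w2 : ↥N) : M) :=
      congrArg (fun z : torsionBySet R M ((((maximalIdeal R) ^ (k+1)) : Ideal R) : Set R) =>
        (z : M)) h12
    exact Subtype.ext (Subtype.ext h2)
  have hsocN : S.mem (ModuleCat.of R (torsionBySet R (↥N) ((p2 : Ideal R) : Set R))) :=
    S.mem_of_injective θ hθ hmk
  have hNmem : S.mem (ModuleCat.of R N) := hC2 (ModuleCat.of R N) htorsN hsocN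
  have htors1 : IsTorsionByPowers R p1 M := fun v => by
    obtain ⟨n, hn⟩ := htors v
    exact ⟨n, fun y hy => hn y (Ideal.pow_right_mono (le_maximalIdeal hp1.ne_top) n hy)⟩
  exact hC1 M htors1 hNmem

end StmtAux

namespace StmtAux

variable {R : Type} [CommRing R]

open Submodule IsLocalRing

/-- The Serre class of modules `M` with `q₁^n M_{q₁} = 0` for some `n`. -/
def badClass (q1 : Ideal R) (hq1 : q1.IsPrime) : SerreClass R where
  mem M := ∃ n : ℕ, ∀ a ∈ q1 ^ n, ∀ v : M, ∃ s, s ∉ q1 ∧ (s * a) • v = 0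
  mem_of_injective := by
    rintro M N f hf ⟨n, hn⟩
    refine ⟨n, fun a ha v => ?_⟩
    obtain ⟨s, hs, h0⟩ := hn a ha (f v)
    refine ⟨s, hs, hf ?_⟩
    rw [map_smul, h0, map_zero]
  mem_of_surjective := by
    rintro M N f hf ⟨n, hn⟩
    refine ⟨n, fun a ha v => ?_⟩
    obtain ⟨w, rfl⟩ := hf v
    obtain ⟨s, hs, h0⟩ := hn a ha w
    exact ⟨s, hs, by rw [← map_smul, h0, map_zero]⟩
  mem_of_extension := by
    rintro A M B f g hf hg hfg ⟨nA, hA⟩ ⟨nB, hB⟩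
    refine ⟨nB + nA, fun a ha v => ?_⟩
    rw [pow_add] at ha
    refine Submodule.mul_induction_on ha ?_ ?_
    · intro c hc d hd
      obtain ⟨s1, hs1, h1⟩ := hB c hc (g v)
      have hker : (s1 * c) • v ∈ LinearMap.ker g := by
        rw [LinearMap.mem_ker, map_smul, h1]
      rw [← hfg] at hker
      obtain ⟨w, hw⟩ := hker
      obtain ⟨s2, hs2, h2⟩ := hA d hd w
      refine ⟨s1 * s2, fun hmem => ((hq1.mem_or_mem hmem).elim hs1 hs2), ?_⟩
      have e1 : (s1 * s2) * (c * d) = (s2 * d) * (s1 * c) := by ring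
      rw [e1, mul_smul, ← hw, ← map_smul, h2, map_zero]
    · intro a1 a2 h1 h2
      obtain ⟨s1, hs1, h1'⟩ := h1
      obtain ⟨s2, hs2, h2'⟩ := h2
      refine ⟨s1 * s2, fun hmem => ((hq1.mem_or_mem hmem).elim hs1 hs2), ?_⟩
      have e1 : (s1 * s2) * (a1 + a2) = s2 * (s1 * a1) + s1 * (s2 * a2) := by ring
      rw [e1, add_smul, mul_smul s2 (s1 * a1) v, mul_smul s1 (s2 * a2) v, h1', h2', smul_zero, smul_zero, add_zero]

/-- `C_m` holds for `badClass`. -/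
lemma badClass_max [IsLocalRing R] (q1 : Ideal R) (hq1 : q1.IsPrime)
    {x : R} (hxm : x ∈ maximalIdeal R) (hxq : x ∉ q1) :
    MelkerssonCondition R (badClass q1 hq1).mem (maximalIdeal R) := by
  intro M htors _
  refine ⟨1, fun a _ v => ?_⟩
  obtain ⟨k, hk⟩ := htors v
  refine ⟨x ^ k, fun hmem => hxq (hq1.mem_of_pow_mem k hmem), ?_⟩
  refine hk _ ?_
  exact Ideal.mul_mem_right a _ (Ideal.pow_mem_pow hxm k)

/-- Saturation of `q1 ^ j` at the prime `q1`. -/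
def satPow (q1 : Ideal R) (hq1 : q1.IsPrime) (j : ℕ) : Ideal R where
  carrier := {a | ∃ s, s ∉ q1 ∧ s * a ∈ q1 ^ j}
  zero_mem' := ⟨1, fun h => hq1.ne_top (Ideal.eq_top_of_isUnit_mem _ h isUnit_one),
    by rw [mul_zero]; exact Submodule.zero_mem _⟩
  add_mem' := by
    rintro a b ⟨s, hs, hsa⟩ ⟨t, ht, htb⟩
    refine ⟨s * t, fun hmem => ((hq1.mem_or_mem hmem).elim hs ht), ?_⟩
    have e : (s * t) * (a + b) = t * (s * a) + s * (t * b) := by ring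
    rw [e]
    exact Submodule.add_mem _ (Ideal.mul_mem_left _ _ hsa) (Ideal.mul_mem_left _ _ htb)
  smul_mem' := by
    rintro c a ⟨s, hs, hsa⟩
    refine ⟨s, hs, ?_⟩
    have e : s * (c • a) = c * (s * a) := by rw [smul_eq_mul]; ring
    rw [e]
    exact Ideal.mul_mem_left _ _ hsa

lemma pow_le_satPow (q1 : Ideal R) (hq1 : q1.IsPrime) (j : ℕ) :
    q1 ^ j ≤ satPow q1 hq1 j :=
  fun a ha => ⟨1, fun h => hq1.ne_top (Ideal.eq_top_of_isUnit_mem _ h isUnit_one),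
    by rwa [one_mul]⟩

lemma satPow_absorb (q1 : Ideal R) (hq1 : q1.IsPrime) (j : ℕ) {s a : R}
    (hs : s ∉ q1) (h : s * a ∈ satPow q1 hq1 j) : a ∈ satPow q1 hq1 j := by
  obtain ⟨t, ht, hta⟩ := h
  refine ⟨t * s, fun hmem => ((hq1.mem_or_mem hmem).elim ht hs), ?_⟩
  rwa [mul_assoc]

/-- If `q1` is not minimal over some prime `q0`, `q1^n` is not contained in the
`(n+1)`-st saturated power. -/
lemma exists_not_satPow [IsNoetherianRing R] (q1 : Ideal R) (hq1 : q1.IsPrime)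
    {q0 : Ideal R} (hq0 : q0.IsPrime) (hlt : q0 < q1) (n : ℕ) :
    ∃ a ∈ q1 ^ n, a ∉ satPow q1 hq1 (n+1) := by
  by_contra hcon
  push_neg at hcon
  have hle : q1 ^ n ≤ satPow q1 hq1 (n+1) := hcon
  haveI := hq1
  let A := Localization.AtPrime q1
  let f := algebraMap R A
  have hmap : (q1.map f) ^ n ≤ (q1.map f) ^ (n+1) := by
    rw [← Ideal.map_pow, ← Ideal.map_pow, Ideal.map_le_iff_le_comap]
    intro a ha
    obtain ⟨s, hs, hsa⟩ := hle ha
    have hu : IsUnit (f s) := IsLocalization.map_units A (⟨s, hs⟩ : q1.primeCompl)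
    have : f s * f a ∈ Ideal.map f (q1 ^ (n+1)) := by
      rw [← map_mul]
      exact Ideal.mem_map_of_mem f hsa
    exact Ideal.mem_comap.mpr ((Ideal.unit_mul_mem_iff_mem _ hu).mp this)
  have hFG : ((q1.map f) ^ n).FG := by
    rw [← Ideal.map_pow]
    exact Ideal.FG.map (IsNoetherian.noetherian _) f
  have hbot : (q1.map f) ^ n = ⊥ := by
    refine Submodule.eq_bot_of_le_smul_of_le_jacobson_bot (q1.map f) _ hFG ?_ ?_
    · rw [Ideal.smul_eq_mul, ← pow_succ']
      exact hmap
    · rw [IsLocalRing.jacobson_eq_maximalIdeal (⊥ : Ideal A) bot_ne_top]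
      rw [Localization.AtPrime.map_eq_maximalIdeal]
  obtain ⟨x, hxq1, hxq0⟩ := SetLike.exists_of_lt hlt
  have hx0 : f (x ^ n) = 0 := by
    have h1 : f (x ^ n) ∈ (q1.map f) ^ n := by
      rw [← Ideal.map_pow]
      exact Ideal.mem_map_of_mem f (Ideal.pow_mem_pow hxq1 n)
    rw [hbot] at h1
    exact h1
  obtain ⟨⟨s, hs⟩, hsx⟩ := (IsLocalization.map_eq_zero_iff q1.primeCompl A _).mp hx0
  have h0q0 : s * x ^ n ∈ q0 := by rw [hsx]; exact Submodule.zero_mem _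
  rcases hq0.mem_or_mem h0q0 with h | h
  · exact hs (le_of_lt hlt h)
  · exact hxq0 (hq0.mem_of_pow_mem n h)

end StmtAux

namespace StmtAux

variable {R : Type} [CommRing R]

open Submodule IsLocalRing

/-- The counterexample module `⨁ₙ R / (q1^{n+1})^{sat}`. -/
abbrev Mbad (q1 : Ideal R) (hq1 : q1.IsPrime) : Type :=
  DirectSum ℕ (fun n => R ⧸ satPow q1 hq1 (n+1))

lemma one_not_mem_prime {q1 : Ideal R} (hq1 : q1.IsPrime) : (1 : R) ∉ q1 :=
  fun h => hq1.ne_top (Ideal.eq_top_of_isUnit_mem _ h isUnit_one)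

lemma bad_torsion (q1 : Ideal R) (hq1 : q1.IsPrime) :
    IsTorsionByPowers R q1 (ModuleCat.of R (Mbad q1 hq1)) := by
  classical
  intro v0
  let v : Mbad q1 hq1 := v0
  have hv : v = v0 := rfl
  refine ⟨(DFinsupp.support v).sup id + 1, fun a ha => ?_⟩
  rw [← hv]
  refine DFinsupp.ext fun n => ?_
  rw [DFinsupp.smul_apply, DFinsupp.zero_apply]
  by_cases hn : v n = 0
  · rw [hn, smul_zero]
  · have hns : n ∈ DFinsupp.support v := DFinsupp.mem_support_iff.mpr hn
    have hle : n + 1 ≤ (DFinsupp.support v).sup id + 1 :=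
      Nat.succ_le_succ (Finset.le_sup (f := id) hns)
    have haq : a ∈ q1 ^ (n+1) := Ideal.pow_le_pow_right hle ha
    obtain ⟨r', hr'⟩ := Submodule.Quotient.mk_surjective _ (v n)
    rw [← hr', ← Submodule.Quotient.mk_smul, Submodule.Quotient.mk_eq_zero]
    have : a • r' = a * r' := rfl
    rw [this]
    exact Ideal.mul_mem_right r' _ (pow_le_satPow q1 hq1 (n+1) haq)

lemma bad_socle (q1 : Ideal R) (hq1 : q1.IsPrime) :
    (badClass q1 hq1).mem (ModuleCat.of R
      (torsionBySet R (ModuleCat.of R (Mbad q1 hq1)) (q1 : Set R))) := by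
  refine ⟨1, fun a ha v => ⟨1, one_not_mem_prime hq1, ?_⟩⟩
  have ha' : a ∈ q1 := by rwa [pow_one] at ha
  have h0 : a • ((show torsionBySet R (Mbad q1 hq1) (q1 : Set R) from v) : Mbad q1 hq1) = 0 :=
    mem_TB.mp (show torsionBySet R (Mbad q1 hq1) (q1 : Set R) from v).2 a ha'
  refine Subtype.ext ?_
  show (1 * a) • ((show torsionBySet R (Mbad q1 hq1) (q1 : Set R) from v) : Mbad q1 hq1) = 0
  rw [one_mul]
  exact h0

lemma bad_not_mem [IsNoetherianRing R] (q1 : Ideal R) (hq1 : q1.IsPrime)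
    {q0 : Ideal R} (hq0 : q0.IsPrime) (hlt : q0 < q1) :
    ¬ (badClass q1 hq1).mem (ModuleCat.of R (Mbad q1 hq1)) := by
  rintro ⟨n, hn⟩
  obtain ⟨a, ha, hnot⟩ := exists_not_satPow q1 hq1 hq0 hlt n
  obtain ⟨s, hs, h0⟩ := hn a ha
    (DirectSum.of (fun m => R ⧸ satPow q1 hq1 (m+1)) n (Submodule.Quotient.mk 1))
  apply hnot
  apply satPow_absorb q1 hq1 (n+1) hs
  have h1 : ((s * a) • (DirectSum.of (fun m => R ⧸ satPow q1 hq1 (m+1)) n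
      (Submodule.Quotient.mk 1) : Mbad q1 hq1)) n = 0 := by rw [h0]; rfl
  rw [DFinsupp.smul_apply, DirectSum.of_eq_same] at h1
  rw [← Submodule.Quotient.mk_smul, Submodule.Quotient.mk_eq_zero] at h1
  have : (s * a) • (1 : R) = s * a := by rw [smul_eq_mul, mul_one]
  rwa [this] at h1

end StmtAux


open StmtAux IsLocalRing in
/-- Over a noetherian local ring: every Serre class `S` has `MP[S]` equal to
`Spec R`, `{p}` for a minimal prime `p`, or `∅`, iff `dim R ≤ 1`. -/
theorem stmt_16 {R : Type} [CommRing R] [IsNoetherianRing R] [IsLocalRing R] :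
    (∀ S : SerreClass R,
        MP R S.mem = Set.univ ∨
        (∃ p : PrimeSpectrum R, p.asIdeal ∈ minimalPrimes R ∧ MP R S.mem = {p}) ∨
        MP R S.mem = ∅) ↔
      ringKrullDim R ≤ 1 := by
  constructor
  · intro Hall
    by_contra hdim
    -- extract a chain of three primes
    have hser : ∃ s : LTSeries (PrimeSpectrum R), ¬ ((s.length : WithBot ℕ∞) ≤ 1) := by
      by_contra hall
      push_neg at hall
      refine hdim ?_
      rw [ringKrullDim]
      exact iSup_le hall
    obtain ⟨s, hslen⟩ := hser
    have hlen2 : 2 ≤ s.length := by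
      by_contra hl
      push_neg at hl
      have : s.length ≤ 1 := by omega
      exact hslen (by exact_mod_cast this)
    let a : PrimeSpectrum R := s ⟨0, by omega⟩
    let b : PrimeSpectrum R := s ⟨1, by omega⟩
    let c : PrimeSpectrum R := s ⟨2, by omega⟩
    have hab : a < b := s.strictMono (by exact Fin.mk_lt_mk.mpr (by omega))
    have hbc : b < c := s.strictMono (by exact Fin.mk_lt_mk.mpr (by omega))
    have hab' : a.asIdeal < b.asIdeal := hab
    have hbc' : b.asIdeal < c.asIdeal := hbc
    obtain ⟨x, hxc, hxb⟩ := SetLike.exists_of_lt hbc'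
    have hxm : x ∈ maximalIdeal R := le_maximalIdeal c.isPrime.ne_top hxc
    set S := badClass b.asIdeal b.isPrime with hS
    have hCm : MelkerssonCondition R S.mem (maximalIdeal R) :=
      badClass_max b.asIdeal b.isPrime hxm hxb
    have hcp : closedPoint R ∈ MP R S.mem := hCm
    have hnotb : b ∉ MP R S.mem := by
      intro hb
      exact bad_not_mem b.asIdeal b.isPrime a.isPrime hab'
        (hb (ModuleCat.of R (Mbad b.asIdeal b.isPrime))
          (bad_torsion b.asIdeal b.isPrime) (bad_socle b.asIdeal b.isPrime))
    rcases Hall S with huniv | ⟨pp, hppmin, heq⟩ | hempty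
    · exact hnotb (huniv ▸ Set.mem_univ b)
    · rw [heq] at hcp
      have hcp' : closedPoint R = pp := hcp
      rw [← hcp'] at hppmin
      have hmb : maximalIdeal R ≤ b.asIdeal :=
        hppmin.2 ⟨b.isPrime, bot_le⟩ (le_maximalIdeal b.isPrime.ne_top)
      exact absurd (lt_of_lt_of_le hbc' (le_trans (le_maximalIdeal c.isPrime.ne_top) hmb))
        (lt_irrefl _)
    · rw [hempty] at hcp
      exact hcp
  · intro hdim S
    by_cases hm : MelkerssonCondition R S.mem (maximalIdeal R)
    · left
      refine Set.eq_univ_of_forall fun q => ?_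
      exact lemA S hdim hm q.asIdeal q.isPrime
    · by_cases hne : MP R S.mem = ∅
      · right; right; exact hne
      · right; left
        obtain ⟨p1, hp1⟩ := Set.nonempty_iff_ne_empty.mpr hne
        have key : ∀ q : PrimeSpectrum R, q ∈ MP R S.mem → q.asIdeal ∈ minimalPrimes R := by
          intro q hq
          have hqm : q.asIdeal ≠ maximalIdeal R := by
            intro h
            exact hm (h ▸ hq)
          exact minimal_of_ne_max q.isPrime hqm hdim
        refine ⟨p1, key p1 hp1, ?_⟩
        refine Set.eq_singleton_iff_unique_mem.mpr ⟨hp1, ?_⟩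
        intro q hq
        by_contra hqe
        have hne2 : q.asIdeal ≠ p1.asIdeal := fun h => hqe (PrimeSpectrum.ext h)
        exact hm (lemB S hdim q.isPrime p1.isPrime (key q hq) hne2 hq hp1)
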